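/- Let φ be an r×1 vector of compactly supported functions in L²(ℝ) satisfying φ = 2∑_{k∈ℤ}a(k)φ(2·−k) a.e. for a finitely supported a:ℤ→ℂ^{r×r}, and let n_φ ≥ max(−l_φ,−l_a) be an integer, where [l_φ,h_φ]:=fs(φ) and [l_a,h_a]:=fs(a). Let j₀,…,j_ℓ be nonnegative integers and p(x) := (x^{j₀},…,x^{j_ℓ})ᵀ. Suppose there exists a sequence of matrices p_v:ℤ→ℂ^{(ℓ+1)×r} such that the polynomial reproduction identity p(x) = ∑_{k∈ℤ} p_v(k)·φ(x−k) holds for a.e. x∈ℝ (the sum being locally finite since φ is compactly supported). Define φ^p := p·χ_{[0,∞)} − ∑_{k≥n_φ} p_v(k)·φ(·−k) and A_{L_p} := diag(2^{−1−j₀},…,2^{−1−j_ℓ}). Then φ^p is supported in [0,∞) and satisfies φ^p = 2A_{L_p}·φ^p(2·) + 2∑_{k≥n_φ} A_p(k)·φ(2·−k) a.e., where A_p(k) := A_{L_p}·p_v(k) − ∑_{n≥n_φ} p_v(n)·a(k−2n) (a finite sum for each k, and the sum over k is locally finite). -/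

import Mathlib

open MeasureTheory Matrix Finset Filter

noncomputable section

namespace Wavelets

/-- membership in `L²(ℝ)` (w.r.t. Lebesgue measure). -/
def MemL2 (f : ℝ → ℂ) : Prop := MeasureTheory.MemLp f 2 (volume : Measure ℝ)

/-- The `L²` inner product `⟨f,g⟩ = ∫ f · conj g`. -/
def inn (f g : ℝ → ℂ) : ℂ := ∫ x : ℝ, f x * (starRingEnd ℂ) (g x)

/-- The squared `L²` norm. -/
def nsq (f : ℝ → ℂ) : ℝ := ∫ x : ℝ, ‖f x‖ ^ 2

/-- supported (a.e.) in `[0,∞)`, i.e. `f` belongs to `L²([0,∞))` if it is also in `L²`. -/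
def SuppHalf (f : ℝ → ℂ) : Prop := ∀ᵐ (x : ℝ) ∂volume, x < 0 → f x = 0

/-- vanishes a.e. outside the interval `[l,h]`. -/
def VanishOutside (f : ℝ → ℂ) (l h : ℤ) : Prop :=
  ∀ᵐ (x : ℝ) ∂volume, x ∉ Set.Icc (l : ℝ) (h : ℝ) → f x = 0

/-- compactly supported (a.e.). -/
def CptSupp (f : ℝ → ℂ) : Prop := ∃ l h : ℤ, VanishOutside f l h

/-- `[l,h] = fs(f)` : the shortest integer-endpoint interval outside which all members of the
family `f` vanish a.e. -/
def IsFS {ι : Type*} (f : ι → ℝ → ℂ) (l h : ℤ) : Prop :=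
  (∀ i, VanishOutside (f i) l h) ∧
    ∀ l' h' : ℤ, (∀ i, VanishOutside (f i) l' h') → l' ≤ l ∧ h ≤ h'

/-- `[l,h] = fs(a)` : the shortest integer interval containing the support of the sequence `a`. -/
def IsFSfilter {M : Type*} [Zero M] (a : ℤ → M) (l h : ℤ) : Prop :=
  (∀ k : ℤ, k ∉ Set.Icc l h → a k = 0) ∧
    ∀ l' h' : ℤ, (∀ k : ℤ, k ∉ Set.Icc l' h' → a k = 0) → l' ≤ l ∧ h ≤ h'

/-- finitely supported sequence. -/
def FinSupp {M : Type*} [Zero M] (a : ℤ → M) : Prop := (Function.support a).Finite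

/-- `(filtSum A φ i x) = (∑_{k∈ℤ} A(k)·φ(x−k))_i`. -/
def filtSum {B : Type*} {r : ℕ} (A : ℤ → Matrix B (Fin r) ℂ) (φ : Fin r → ℝ → ℂ)
    (i : B) (x : ℝ) : ℂ :=
  ∑ᶠ k : ℤ, ∑ j : Fin r, A k i j * φ j (x - (k : ℝ))

/-- `(filtSumGe A φ n i x) = (∑_{k ≥ n} A(k)·φ(x−k))_i`. -/
def filtSumGe {B : Type*} {r : ℕ} (A : ℤ → Matrix B (Fin r) ℂ) (φ : Fin r → ℝ → ℂ)
    (n : ℤ) (i : B) (x : ℝ) : ℂ :=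
  ∑ᶠ (k : ℤ) (_ : n ≤ k), ∑ j : Fin r, A k i j * φ j (x - (k : ℝ))

/-- dyadic dilation `2^{j/2} f(2^j ·)`. -/
def dil (j : ℤ) (f : ℝ → ℂ) : ℝ → ℂ :=
  fun x => ((Real.sqrt 2 ^ j : ℝ) : ℂ) * f ((2 : ℝ) ^ j * x)

/-- finite linear combination of a family of functions. -/
def fc {I : Type*} (c : I →₀ ℂ) (F : I → ℝ → ℂ) : ℝ → ℂ :=
  fun x => ∑ i ∈ c.support, c i * F i x

/-- Riesz sequence (of functions, in `L²`). -/
def RieszSeq {I : Type*} (F : I → ℝ → ℂ) : Prop :=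
  ∃ C > (0 : ℝ), ∀ c : I →₀ ℂ,
    C⁻¹ * (∑ i ∈ c.support, ‖c i‖ ^ 2) ≤ nsq (fc c F) ∧
      nsq (fc c F) ≤ C * (∑ i ∈ c.support, ‖c i‖ ^ 2)

/-- Bessel sequence in `L²(ℝ)`. -/
def Bessel {I : Type*} (F : I → ℝ → ℂ) : Prop :=
  ∃ C > (0 : ℝ), ∀ f : ℝ → ℂ, MemL2 f → (∑' i : I, ‖inn f (F i)‖ ^ 2) ≤ C * nsq f

/-- Bessel sequence in `L²([0,∞))`. -/
def BesselHalf {I : Type*} (F : I → ℝ → ℂ) : Prop :=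
  ∃ C > (0 : ℝ), ∀ f : ℝ → ℂ, MemL2 f → SuppHalf f →
    (∑' i : I, ‖inn f (F i)‖ ^ 2) ≤ C * nsq f

/-- `f` lies in the `L²`-closure of the linear span of the family `F`. -/
def InClosedSpan {I : Type*} (F : I → ℝ → ℂ) (f : ℝ → ℂ) : Prop :=
  MemL2 f ∧ ∀ ε > (0 : ℝ), ∃ c : I →₀ ℂ, nsq (fun x => f x - fc c F x) < ε ^ 2

/-- Riesz basis of `L²(ℝ)`. -/
def RieszBasisR {I : Type*} (F : I → ℝ → ℂ) : Prop :=
  (∀ i, MemL2 (F i)) ∧ RieszSeq F ∧ ∀ f : ℝ → ℂ, MemL2 f → InClosedSpan F f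

/-- Riesz basis of `L²([0,∞))`. -/
def RieszBasisHalf {I : Type*} (F : I → ℝ → ℂ) : Prop :=
  (∀ i, MemL2 (F i) ∧ SuppHalf (F i)) ∧ RieszSeq F ∧
    ∀ f : ℝ → ℂ, MemL2 f → SuppHalf f → InClosedSpan F f

/-- biorthogonal families over the same index set. -/
def Biorth {I : Type*} [DecidableEq I] (F G : I → ℝ → ℂ) : Prop :=
  ∀ i j : I, inn (F i) (G j) = if i = j then 1 else 0

/-- orthonormal family of functions. -/
def OrthonormalFam {I : Type*} [DecidableEq I] (F : I → ℝ → ℂ) : Prop :=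
  ∀ i j : I, inn (F i) (F j) = if i = j then 1 else 0

/-- orthonormal basis of `L²([0,∞))`. -/
def ONBasisHalf {I : Type*} [DecidableEq I] (F : I → ℝ → ℂ) : Prop :=
  (∀ i, MemL2 (F i) ∧ SuppHalf (F i)) ∧ OrthonormalFam F ∧
    ∀ f : ℝ → ℂ, MemL2 f → SuppHalf f → InClosedSpan F f

/-- orthonormal basis of `L²(ℝ)`. -/
def ONBasisR {I : Type*} [DecidableEq I] (F : I → ℝ → ℂ) : Prop :=
  (∀ i, MemL2 (F i)) ∧ OrthonormalFam F ∧ ∀ f : ℝ → ℂ, MemL2 f → InClosedSpan F f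

/-- `f` has (at least) `m` vanishing moments. -/
def VMo (f : ℝ → ℂ) (m : ℕ) : Prop := ∀ j < m, (∫ x : ℝ, (x : ℂ) ^ j * f x) = 0

/-- index set of the affine system `AS₀(φ;ψ)` over `ℝ`. -/
abbrev ASIndexR (r : ℕ) := (Fin r × ℤ) ⊕ (Fin r × ℕ × ℤ)

/-- the affine system `AS₀(φ;ψ)` over the real line. -/
def ASR {r : ℕ} (φ ψ : Fin r → ℝ → ℂ) : ASIndexR r → ℝ → ℂ
  | Sum.inl (i, k) => fun x => φ i (x - (k : ℝ))
  | Sum.inr (i, j, k) => fun x =>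
      ((Real.sqrt 2 ^ (j : ℕ) : ℝ) : ℂ) * ψ i ((2 : ℝ) ^ (j : ℕ) * x - (k : ℝ))

/-- index set `{boundary} ⊔ {(component, shift k ≥ n)}`. -/
abbrev HIdx (B : Type*) (r : ℕ) (n : ℤ) := B ⊕ (Fin r × {k : ℤ // n ≤ k})

/-- the family `Φ = {φ^L} ∪ {φ(·−k) : k ≥ n}`. -/
def PhiFam {B : Type*} {r : ℕ} (φL : B → ℝ → ℂ) (φ : Fin r → ℝ → ℂ) (n : ℤ) :
    HIdx B r n → ℝ → ℂ
  | Sum.inl i => φL i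
  | Sum.inr (i, k) => fun x => φ i (x - (k.1 : ℝ))

/-- the augmented boundary block `{φ^L} ∪ {φ(·−(n+t)) : 0 ≤ t < m}`. -/
def bdryAug {B : Type*} {r : ℕ} (φL : B → ℝ → ℂ) (φ : Fin r → ℝ → ℂ) (n : ℤ) (m : ℕ) :
    (B ⊕ Fin r × Fin m) → ℝ → ℂ
  | Sum.inl i => φL i
  | Sum.inr (i, t) => fun x => φ i (x - ((n + (t : ℕ) : ℤ) : ℝ))

/-- index set of the system `AS_J(Φ;Ψ)_{[0,∞)}`. -/
abbrev ASIdxH (A B : Type*) (J : ℤ) := A ⊕ ({j : ℤ // J ≤ j} × B)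

/-- the system `AS_J(Φ;Ψ)_{[0,∞)} = {2^{J/2}h(2^J·) : h ∈ Φ} ∪ {2^{j/2}η(2^j·) : j ≥ J, η ∈ Ψ}`. -/
def ASH {A B : Type*} (Φ : A → ℝ → ℂ) (Ψ : B → ℝ → ℂ) (J : ℤ) : ASIdxH A B J → ℝ → ℂ
  | Sum.inl a => dil J (Φ a)
  | Sum.inr (j, b) => dil j.1 (Ψ b)

/-- nonstationary system `AS_J(Φ_J;{Ψ_j}_{j≥J})` where the scale `J+n` uses the family `Ψ n`. -/
def ASHns {A : Type*} {B : ℕ → Type*} (Φ : A → ℝ → ℂ) (Ψ : ∀ n, B n → ℝ → ℂ) (J : ℤ) :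
    (A ⊕ (Σ n : ℕ, B n)) → ℝ → ℂ
  | Sum.inl a => dil J (Φ a)
  | Sum.inr ⟨n, b⟩ => dil (J + (n : ℤ)) (Ψ n b)

/-- the Fourier series `û(ξ) = ∑_k u(k) e^{−ikξ}` of a finitely supported matrix filter. -/
def fhat {r : ℕ} (a : ℤ → Matrix (Fin r) (Fin r) ℂ) (ξ : ℝ) : Matrix (Fin r) (Fin r) ℂ :=
  ∑ᶠ k : ℤ, Complex.exp (-(Complex.I * (k : ℂ) * (ξ : ℂ))) • a k

/-- the shift `η(·−k₀)` is supported in `[0,∞)` and satisfies the one-sided refinement relation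
`η(·−k₀) = 2 ∑_{k≥n} u(k−2k₀) φ(2·−k)`. -/
def shiftRef {r : ℕ} (η φ : Fin r → ℝ → ℂ) (u : ℤ → Matrix (Fin r) (Fin r) ℂ)
    (n k₀ : ℤ) : Prop :=
  ∀ i : Fin r, (∀ᵐ (x : ℝ) ∂volume, x < 0 → η i (x - (k₀ : ℝ)) = 0) ∧
    ∀ᵐ (x : ℝ) ∂volume,
      η i (x - (k₀ : ℝ)) = 2 * filtSumGe (fun k => u (k - 2 * k₀)) φ n i (2 * x)

/-- the partial sums `∑_{i∈s} c_i F_i` converge (as a net over finite subsets) to `f` in `L²`. -/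
def L2LimTo {I : Type*} (c : I → ℂ) (F : I → ℝ → ℂ) (f : ℝ → ℂ) : Prop :=
  ∀ ε > (0 : ℝ), ∃ s₀ : Finset I, ∀ s : Finset I, s₀ ⊆ s →
    nsq (fun x => f x - ∑ i ∈ s, c i * F i x) < ε ^ 2

/-- `p(d/dx) f(x) |_{x=0}` with one-sided (right) derivatives at `0`. -/
def pD (p : Polynomial ℂ) (f : ℝ → ℂ) : ℂ :=
  ∑ n ∈ Finset.range (p.natDegree + 1),
    p.coeff n * iteratedDerivWithin n f (Set.Ici (0 : ℝ)) 0

/-- Riesz sequence in an abstract Hilbert space. -/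
def RieszSeqH {H : Type*} [NormedAddCommGroup H] [InnerProductSpace ℂ H]
    {I : Type*} (h : I → H) : Prop :=
  ∃ C > (0 : ℝ), ∀ c : I →₀ ℂ,
    C⁻¹ * (∑ i ∈ c.support, ‖c i‖ ^ 2) ≤ ‖∑ i ∈ c.support, c i • h i‖ ^ 2 ∧
      ‖∑ i ∈ c.support, c i • h i‖ ^ 2 ≤ C * (∑ i ∈ c.support, ‖c i‖ ^ 2)

/-- Bessel sequence in an abstract Hilbert space. -/
def BesselH {H : Type*} [NormedAddCommGroup H] [InnerProductSpace ℂ H]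
    {I : Type*} (h : I → H) : Prop :=
  ∃ C > (0 : ℝ), ∀ f : H, (∑' i : I, ‖(inner ℂ f (h i) : ℂ)‖ ^ 2) ≤ C * ‖f‖ ^ 2

/-- reindexing of `Φ = {φ^L}∪{φ(·−k):k≥n}` splitting off the shifts `n ≤ k < nt` into the
boundary block. -/
def phiReindex {p r : ℕ} (n nt : ℤ) (h : n ≤ nt) :
    HIdx (Fin p) r n → HIdx (Fin p ⊕ Fin r × Fin (nt - n).toNat) r nt
  | Sum.inl i => Sum.inl (Sum.inl i)
  | Sum.inr (i, k) =>
      if hk : nt ≤ k.1 then Sum.inr (i, ⟨k.1, hk⟩)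
      else Sum.inl (Sum.inr (i, ⟨(k.1 - n).toNat, by
        have hnk := k.2; omega⟩))

/-- embedding of the boundary block `{ψ^L}∪{ψ(·−(n+t)) : t < m}` into `{ψ^L}∪{ψ(·−k):k≥n}`. -/
def embBdry {q r : ℕ} (n : ℤ) (m : ℕ) :
    (Fin q ⊕ Fin r × Fin m) → HIdx (Fin q) r n
  | Sum.inl i => Sum.inl i
  | Sum.inr (i, t) => Sum.inr (i, ⟨n + (t : ℕ), by omega⟩)

/-- A compactly supported biorthogonal (multi)wavelet in `L²(ℝ)` together with a finitely
supported biorthogonal wavelet filter bank, as in Theorem `thm:bw` of the paper. -/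
structure BiorthWaveletFB (r : ℕ) where
  φ : Fin r → ℝ → ℂ
  ψ : Fin r → ℝ → ℂ
  tφ : Fin r → ℝ → ℂ
  tψ : Fin r → ℝ → ℂ
  a : ℤ → Matrix (Fin r) (Fin r) ℂ
  b : ℤ → Matrix (Fin r) (Fin r) ℂ
  ta : ℤ → Matrix (Fin r) (Fin r) ℂ
  tb : ℤ → Matrix (Fin r) (Fin r) ℂ
  memL2 : ∀ i, MemL2 (φ i) ∧ MemL2 (ψ i) ∧ MemL2 (tφ i) ∧ MemL2 (tψ i)
  cpt : ∀ i, CptSupp (φ i) ∧ CptSupp (ψ i) ∧ CptSupp (tφ i) ∧ CptSupp (tψ i)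
  fin_a : FinSupp a
  fin_b : FinSupp b
  fin_ta : FinSupp ta
  fin_tb : FinSupp tb
  ref_φ : ∀ i, ∀ᵐ (x : ℝ) ∂volume, φ i x = 2 * filtSum a φ i (2 * x)
  ref_ψ : ∀ i, ∀ᵐ (x : ℝ) ∂volume, ψ i x = 2 * filtSum b φ i (2 * x)
  ref_tφ : ∀ i, ∀ᵐ (x : ℝ) ∂volume, tφ i x = 2 * filtSum ta tφ i (2 * x)
  ref_tψ : ∀ i, ∀ᵐ (x : ℝ) ∂volume, tψ i x = 2 * filtSum tb tφ i (2 * x)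
  biorth_shift : ∀ k : ℤ, ∀ i j : Fin r,
    inn (φ i) (fun x => tφ j (x - (k : ℝ))) = if k = 0 ∧ i = j then 1 else 0
  pr₁ : ∀ ξ : ℝ,
    fhat ta ξ * (fhat a ξ)ᴴ + fhat ta (ξ + Real.pi) * (fhat a (ξ + Real.pi))ᴴ = 1
  pr₂ : ∀ ξ : ℝ,
    fhat ta ξ * (fhat b ξ)ᴴ + fhat ta (ξ + Real.pi) * (fhat b (ξ + Real.pi))ᴴ = 0
  pr₃ : ∀ ξ : ℝ,
    fhat tb ξ * (fhat a ξ)ᴴ + fhat tb (ξ + Real.pi) * (fhat a (ξ + Real.pi))ᴴ = 0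
  pr₄ : ∀ ξ : ℝ,
    fhat tb ξ * (fhat b ξ)ᴴ + fhat tb (ξ + Real.pi) * (fhat b (ξ + Real.pi))ᴴ = 1
  rieszR : RieszBasisR (ASR φ ψ)
  rieszRt : RieszBasisR (ASR tφ tψ)
  biorthAS : Biorth (ASR φ ψ) (ASR tφ tψ)

/-- A compactly supported biorthogonal (multi)wavelet in `L²(ℝ)` (no filter bank data). -/
structure BiorthWavelet (r : ℕ) where
  φ : Fin r → ℝ → ℂ
  ψ : Fin r → ℝ → ℂ
  tφ : Fin r → ℝ → ℂ
  tψ : Fin r → ℝ → ℂ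
  memL2 : ∀ i, MemL2 (φ i) ∧ MemL2 (ψ i) ∧ MemL2 (tφ i) ∧ MemL2 (tψ i)
  cpt : ∀ i, CptSupp (φ i) ∧ CptSupp (ψ i) ∧ CptSupp (tφ i) ∧ CptSupp (tψ i)
  rieszR : RieszBasisR (ASR φ ψ)
  rieszRt : RieszBasisR (ASR tφ tψ)
  biorthAS : Biorth (ASR φ ψ) (ASR tφ tψ)


lemma finsum_cond_eq_sum_Icc (f : ℤ → ℂ) (lo hi : ℤ)
    (h0 : ∀ k : ℤ, lo ≤ k → hi < k → f k = 0) :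
    (∑ᶠ (k : ℤ) (_ : lo ≤ k), f k) = ∑ k ∈ Finset.Icc lo hi, f k := by
  have h1 : (∑ᶠ (k : ℤ) (_ : lo ≤ k), f k) = ∑ᶠ k : ℤ, if lo ≤ k then f k else 0 :=
    finsum_congr fun k => finsum_eq_if
  have hsupp : (Function.support fun k : ℤ => if lo ≤ k then f k else 0) ⊆
      ↑(Finset.Icc lo hi) := by
    intro k hk
    simp only [Function.mem_support, ne_eq] at hk
    by_cases hlo : lo ≤ k
    · rw [if_pos hlo] at hk
      simp only [Finset.coe_Icc, Set.mem_Icc]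
      refine ⟨hlo, ?_⟩
      by_contra hh
      exact hk (h0 k hlo (by omega))
    · rw [if_neg hlo] at hk; exact absurd rfl hk
  rw [h1, finsum_eq_sum_of_support_subset _ hsupp]
  refine Finset.sum_congr rfl fun k hk => ?_
  rw [Finset.mem_Icc] at hk
  rw [if_pos hk.1]

lemma step_lemma {r : ℕ} (φ : Fin r → ℝ → ℂ) (a : ℤ → Matrix (Fin r) (Fin r) ℂ)
    (lφ la nφ K : ℤ) (hla : ∀ k : ℤ, k < la → a k = 0)
    (hnφ2 : -la ≤ nφ)
    (x : ℝ)
    (hv2 : ∀ (k : ℤ) (i : Fin r), 2 * x - (k : ℝ) < lφ → φ i (2 * x - k) = 0)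
    (hK2 : ∀ k : ℤ, K < k → 2 * x - (k : ℝ) < lφ)
    (n : ℤ) (hn1 : nφ ≤ n) (j' : Fin r)
    (hrfn : φ j' (x - (n : ℝ)) = 2 * filtSum a φ j' (2 * (x - (n : ℝ)))) :
    φ j' (x - (n : ℝ)) =
      2 * ∑ k ∈ Finset.Icc nφ K, ∑ jj, a (k - 2 * n) j' jj * φ jj (2 * x - (k : ℝ)) := by
  rw [hrfn]
  congr 1
  set H : ℤ → ℂ := fun k => ∑ jj, a (k - 2 * n) j' jj * φ jj (2 * x - (k : ℝ)) with hH
  have e : ∀ m : ℤ, (∑ jj, a m j' jj * φ jj (2 * (x - (n : ℝ)) - (m : ℝ)))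
      = H ((Equiv.addRight (2 * n)) m) := by
    intro m
    simp only [hH, Equiv.coe_addRight]
    refine Finset.sum_congr rfl fun jj _ => ?_
    have h1 : m + 2 * n - 2 * n = m := by ring
    have h2 : 2 * (x - (n : ℝ)) - (m : ℝ) = 2 * x - ((m + 2 * n : ℤ) : ℝ) := by
      push_cast; ring
    rw [h1, h2]
  rw [filtSum, finsum_congr e, finsum_comp_equiv (Equiv.addRight (2 * n))]
  have hsupp : Function.support H ⊆ ↑(Finset.Icc nφ K) := by
    intro k hk
    simp only [Function.mem_support, ne_eq, hH] at hk
    obtain ⟨jj, -, hjj⟩ := Finset.exists_ne_zero_of_sum_ne_zero hk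
    have ha : a (k - 2 * n) ≠ 0 := by
      intro h0; rw [h0] at hjj; simp at hjj
    have hφ : φ jj (2 * x - (k : ℝ)) ≠ 0 := by
      intro h0; rw [h0] at hjj; simp at hjj
    have hk1 : la ≤ k - 2 * n := by by_contra h; exact ha (hla _ (by omega))
    have hk2 : k ≤ K := by
      by_contra h
      exact hφ (hv2 k jj (hK2 k (by omega)))
    simp only [Finset.coe_Icc, Set.mem_Icc]
    omega
  exact finsum_eq_sum_of_support_subset _ hsupp

lemma sum_swap4 {M ι₁ ι₂ ι₃ ι₄ : Type*} [AddCommMonoid M]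
    (s₁ : Finset ι₁) (s₂ : Finset ι₂) (s₃ : Finset ι₃) (s₄ : Finset ι₄)
    (f : ι₁ → ι₂ → ι₃ → ι₄ → M) :
    (∑ a ∈ s₁, ∑ b ∈ s₂, ∑ c ∈ s₃, ∑ d ∈ s₄, f a b c d)
      = ∑ c ∈ s₃, ∑ d ∈ s₄, ∑ a ∈ s₁, ∑ b ∈ s₂, f a b c d :=
  calc (∑ a ∈ s₁, ∑ b ∈ s₂, ∑ c ∈ s₃, ∑ d ∈ s₄, f a b c d)
      = ∑ a ∈ s₁, ∑ c ∈ s₃, ∑ b ∈ s₂, ∑ d ∈ s₄, f a b c d :=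
        Finset.sum_congr rfl fun a _ => Finset.sum_comm
    _ = ∑ c ∈ s₃, ∑ a ∈ s₁, ∑ b ∈ s₂, ∑ d ∈ s₄, f a b c d := Finset.sum_comm
    _ = ∑ c ∈ s₃, ∑ a ∈ s₁, ∑ d ∈ s₄, ∑ b ∈ s₂, f a b c d :=
        Finset.sum_congr rfl fun c _ => Finset.sum_congr rfl fun a _ => Finset.sum_comm
    _ = ∑ c ∈ s₃, ∑ d ∈ s₄, ∑ a ∈ s₁, ∑ b ∈ s₂, f a b c d :=
        Finset.sum_congr rfl fun c _ => Finset.sum_comm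

lemma core2 {r ℓ : ℕ} (φ : Fin r → ℝ → ℂ) (a : ℤ → Matrix (Fin r) (Fin r) ℂ)
    (lφ la nφ : ℤ) (hla : ∀ k : ℤ, k < la → a k = 0)
    (hnφ2 : -la ≤ nφ)
    (t : Fin (ℓ + 1)) (j : ℕ) (pv : ℤ → Matrix (Fin (ℓ + 1)) (Fin r) ℂ)
    (Ap : ℤ → Matrix (Fin (ℓ + 1)) (Fin r) ℂ)
    (hAp : ∀ k jj, Ap k t jj = (2 : ℂ) ^ (-(1 + (j : ℤ))) * pv k t jj -
        ∑ᶠ (n : ℤ) (_ : nφ ≤ n), ∑ j', pv n t j' * a (k - 2 * n) j' jj)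
    (x : ℝ)
    (hv1 : ∀ (k : ℤ) (i : Fin r), x - (k : ℝ) < lφ → φ i (x - k) = 0)
    (hv2 : ∀ (k : ℤ) (i : Fin r), 2 * x - (k : ℝ) < lφ → φ i (2 * x - k) = 0)
    (hrf : ∀ (n : ℤ) (i : Fin r), φ i (x - (n : ℝ)) = 2 * filtSum a φ i (2 * (x - (n : ℝ)))) :
    (Function.support fun k : ℤ =>
        if nφ ≤ k then ∑ jj, Ap k t jj * φ jj (2 * x - (k : ℝ)) else 0).Finite ∧
    ((if 0 ≤ x then ((x : ℝ) : ℂ) ^ j else 0) -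
        ∑ᶠ (k : ℤ) (_ : nφ ≤ k), ∑ jj, pv k t jj * φ jj (x - (k : ℝ)))
      = 2 * (2 : ℂ) ^ (-(1 + (j : ℤ))) *
          ((if 0 ≤ 2 * x then ((2 * x : ℝ) : ℂ) ^ j else 0) -
            ∑ᶠ (k : ℤ) (_ : nφ ≤ k), ∑ jj, pv k t jj * φ jj (2 * x - (k : ℝ)))
        + 2 * filtSumGe Ap φ nφ t (2 * x) := by
  set c : ℂ := (2 : ℂ) ^ (-(1 + (j : ℤ))) with hc
  set K : ℤ := max (-la) (max ⌈x - (lφ : ℝ)⌉ ⌈2 * x - (lφ : ℝ)⌉) with hKdef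
  set A : Finset ℤ := Finset.Icc nφ K with hA
  have hK1 : ∀ k : ℤ, K < k → x - (k : ℝ) < lφ := by
    intro k hk
    have h1 : (⌈x - (lφ : ℝ)⌉ : ℤ) ≤ K := le_trans (le_max_left _ _) (le_max_right _ _)
    have h2 : x - (lφ : ℝ) ≤ (⌈x - (lφ : ℝ)⌉ : ℝ) := Int.le_ceil _
    have h3 : ((⌈x - (lφ : ℝ)⌉ : ℤ) : ℝ) ≤ (K : ℝ) := by exact_mod_cast h1
    have h4 : (K : ℝ) < (k : ℝ) := by exact_mod_cast hk
    linarith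
  have hK2 : ∀ k : ℤ, K < k → 2 * x - (k : ℝ) < lφ := by
    intro k hk
    have h1 : (⌈2 * x - (lφ : ℝ)⌉ : ℤ) ≤ K := le_trans (le_max_right _ _) (le_max_right _ _)
    have h2 : 2 * x - (lφ : ℝ) ≤ (⌈2 * x - (lφ : ℝ)⌉ : ℝ) := Int.le_ceil _
    have h3 : ((⌈2 * x - (lφ : ℝ)⌉ : ℤ) : ℝ) ≤ (K : ℝ) := by exact_mod_cast h1
    have h4 : (K : ℝ) < (k : ℝ) := by exact_mod_cast hk
    linarith
  have hKla : -la ≤ K := le_max_left _ _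
  have e1 : (∑ᶠ (k : ℤ) (_ : nφ ≤ k), ∑ jj, pv k t jj * φ jj (x - (k : ℝ)))
      = ∑ k ∈ A, ∑ jj, pv k t jj * φ jj (x - (k : ℝ)) :=
    finsum_cond_eq_sum_Icc _ _ _ fun k _ hk2 =>
      Finset.sum_eq_zero fun jj _ => by rw [hv1 k jj (hK1 k hk2), mul_zero]
  have e2 : (∑ᶠ (k : ℤ) (_ : nφ ≤ k), ∑ jj, pv k t jj * φ jj (2 * x - (k : ℝ)))
      = ∑ k ∈ A, ∑ jj, pv k t jj * φ jj (2 * x - (k : ℝ)) :=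
    finsum_cond_eq_sum_Icc _ _ _ fun k _ hk2 =>
      Finset.sum_eq_zero fun jj _ => by rw [hv2 k jj (hK2 k hk2), mul_zero]
  have e3 : filtSumGe Ap φ nφ t (2 * x)
      = ∑ k ∈ A, ∑ jj, Ap k t jj * φ jj (2 * x - (k : ℝ)) := by
    rw [filtSumGe]
    exact finsum_cond_eq_sum_Icc _ _ _ fun k _ hk2 =>
      Finset.sum_eq_zero fun jj _ => by rw [hv2 k jj (hK2 k hk2), mul_zero]
  have e4 : ∀ k : ℤ, k ≤ K → ∀ jj : Fin r,
      (∑ᶠ (n : ℤ) (_ : nφ ≤ n), ∑ j', pv n t j' * a (k - 2 * n) j' jj)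
        = ∑ n ∈ A, ∑ j', pv n t j' * a (k - 2 * n) j' jj := by
    intro k hkK jj
    apply finsum_cond_eq_sum_Icc
    intro n hn1 hn2
    apply Finset.sum_eq_zero
    intro j' _
    have hz : a (k - 2 * n) = 0 := hla _ (by omega)
    rw [hz]
    simp
  constructor
  · apply Set.Finite.subset A.finite_toSet
    intro k hk
    simp only [Function.mem_support, ne_eq] at hk
    by_cases h : nφ ≤ k
    · rw [if_pos h] at hk
      obtain ⟨jj, -, hjj⟩ := Finset.exists_ne_zero_of_sum_ne_zero hk
      have hφ : φ jj (2 * x - (k : ℝ)) ≠ 0 := fun h0 => hjj (by rw [h0, mul_zero])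
      have hkK : k ≤ K := by
        by_contra hh
        exact hφ (hv2 k jj (hK2 k (by omega)))
      simp only [hA, Finset.coe_Icc, Set.mem_Icc]
      exact ⟨h, hkK⟩
    · rw [if_neg h] at hk; exact absurd rfl hk
  rw [e1, e2, e3]
  have hpow : 2 * c * ((2 * x : ℝ) : ℂ) ^ j = ((x : ℝ) : ℂ) ^ j := by
    have hcast : ((2 * x : ℝ) : ℂ) = 2 * ((x : ℝ) : ℂ) := by push_cast; ring
    have hc' : c = ((2 : ℂ) * 2 ^ j)⁻¹ := by
      rw [hc, _root_.zpow_neg]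
      congr 1
      rw [zpow_add₀ (two_ne_zero) 1 (j : ℤ), zpow_one, zpow_natCast]
    rw [hcast, mul_pow, hc']
    have h2j : ((2 : ℂ) * 2 ^ j) ≠ 0 := by
      exact mul_ne_zero two_ne_zero (pow_ne_zero _ two_ne_zero)
    field_simp
  have hchi : (if 0 ≤ x then ((x : ℝ) : ℂ) ^ j else 0)
      = 2 * c * (if 0 ≤ 2 * x then ((2 * x : ℝ) : ℂ) ^ j else 0) := by
    by_cases hx : 0 ≤ x
    · rw [if_pos hx, if_pos (by linarith), hpow]
    · rw [if_neg hx, if_neg (fun h => hx (by linarith)), mul_zero]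
  have hstep : ∀ n ∈ A, ∀ j' : Fin r, φ j' (x - (n : ℝ))
      = 2 * ∑ k ∈ A, ∑ jj, a (k - 2 * n) j' jj * φ jj (2 * x - (k : ℝ)) := by
    intro n hn j'
    rw [hA, Finset.mem_Icc] at hn
    exact step_lemma φ a lφ la nφ K hla hnφ2 x hv2 hK2 n hn.1 j' (hrf n j')
  have hT : (∑ k ∈ A, ∑ jj, pv k t jj * φ jj (x - (k : ℝ)))
      = 2 * ∑ k ∈ A, ∑ jj,
          (∑ n ∈ A, ∑ j', pv n t j' * a (k - 2 * n) j' jj) * φ jj (2 * x - (k : ℝ)) := by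
    calc (∑ k ∈ A, ∑ jj, pv k t jj * φ jj (x - (k : ℝ)))
        = ∑ n ∈ A, ∑ j', pv n t j' *
            (2 * ∑ k ∈ A, ∑ jj, a (k - 2 * n) j' jj * φ jj (2 * x - (k : ℝ))) :=
          Finset.sum_congr rfl fun n hn => Finset.sum_congr rfl fun j' _ => by
            rw [hstep n hn j']
      _ = ∑ n ∈ A, ∑ j' : Fin r, ∑ k ∈ A, ∑ jj : Fin r,
            2 * (pv n t j' * (a (k - 2 * n) j' jj * φ jj (2 * x - (k : ℝ)))) := by
          refine Finset.sum_congr rfl fun n _ => Finset.sum_congr rfl fun j' _ => ?_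
          simp only [Finset.mul_sum]
          exact Finset.sum_congr rfl fun k _ => Finset.sum_congr rfl fun jj _ => by ring
      _ = ∑ k ∈ A, ∑ jj : Fin r, ∑ n ∈ A, ∑ j' : Fin r,
            2 * (pv n t j' * (a (k - 2 * n) j' jj * φ jj (2 * x - (k : ℝ)))) :=
          sum_swap4 _ _ _ _ _
      _ = 2 * ∑ k ∈ A, ∑ jj,
            (∑ n ∈ A, ∑ j', pv n t j' * a (k - 2 * n) j' jj) * φ jj (2 * x - (k : ℝ)) := by
          simp only [Finset.mul_sum, Finset.sum_mul]
          refine Finset.sum_congr rfl fun k _ => Finset.sum_congr rfl fun jj _ => ?_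
          exact Finset.sum_congr rfl fun n _ => Finset.sum_congr rfl fun j' _ => by ring
  have hG : (∑ k ∈ A, ∑ jj, Ap k t jj * φ jj (2 * x - (k : ℝ)))
      = c * (∑ k ∈ A, ∑ jj, pv k t jj * φ jj (2 * x - (k : ℝ)))
        - ∑ k ∈ A, ∑ jj,
            (∑ n ∈ A, ∑ j', pv n t j' * a (k - 2 * n) j' jj) * φ jj (2 * x - (k : ℝ)) := by
    rw [Finset.mul_sum, ← Finset.sum_sub_distrib]
    refine Finset.sum_congr rfl fun k hk => ?_
    rw [Finset.mul_sum, ← Finset.sum_sub_distrib]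
    refine Finset.sum_congr rfl fun jj _ => ?_
    have hkK : k ≤ K := by
      rw [hA, Finset.mem_Icc] at hk
      exact hk.2
    rw [hAp k jj, e4 k hkK jj, sub_mul]
    ring
  rw [hchi, hT, hG]
  ring

lemma core1 {r ℓ : ℕ} (φ : Fin r → ℝ → ℂ)
    (lφ nφ : ℤ) (hnφ1 : -lφ ≤ nφ)
    (t : Fin (ℓ + 1)) (j : ℕ) (pv : ℤ → Matrix (Fin (ℓ + 1)) (Fin r) ℂ)
    (x : ℝ) (hx : x < 0)
    (hv1 : ∀ (k : ℤ) (i : Fin r), x - (k : ℝ) < lφ → φ i (x - k) = 0) :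
    ((if 0 ≤ x then ((x : ℝ) : ℂ) ^ j else 0) -
      ∑ᶠ (k : ℤ) (_ : nφ ≤ k), ∑ jj, pv k t jj * φ jj (x - (k : ℝ))) = 0 := by
  rw [if_neg (not_le.2 hx)]
  have hz : (∑ᶠ (k : ℤ) (_ : nφ ≤ k), ∑ jj, pv k t jj * φ jj (x - (k : ℝ))) = 0 := by
    rw [finsum_congr fun k : ℤ => (finsum_eq_if (p := nφ ≤ k))]
    apply finsum_eq_zero_of_forall_eq_zero
    intro k
    split_ifs with hk
    · apply Finset.sum_eq_zero
      intro jj _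
      have hlt : x - (k : ℝ) < lφ := by
        have h1 : ((nφ : ℤ) : ℝ) ≤ (k : ℝ) := by exact_mod_cast hk
        have h2 : -((lφ : ℤ) : ℝ) ≤ ((nφ : ℤ) : ℝ) := by exact_mod_cast hnφ1
        linarith
      rw [hv1 k jj hlt, mul_zero]
    · rfl
  rw [hz, sub_zero]

lemma ae_shift {p : ℝ → Prop} (h : ∀ᵐ y : ℝ ∂volume, p y) (c : ℝ) :
    ∀ᵐ x : ℝ ∂volume, p (x - c) :=
  ((measurePreserving_sub_right (volume : Measure ℝ)
    c).quasiMeasurePreserving.tendsto_ae).eventually h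

lemma ae_two_mul {p : ℝ → Prop} (h : ∀ᵐ y : ℝ ∂volume, p y) :
    ∀ᵐ x : ℝ ∂volume, p (2 * x) := by
  have hq : Measure.QuasiMeasurePreserving (fun x : ℝ => 2 * x) volume volume := by
    refine ⟨measurable_const_mul 2, ?_⟩
    rw [show (fun x : ℝ => 2 * x) = (2 * ·) from rfl,
      Real.map_volume_mul_left (two_ne_zero)]
    exact Measure.smul_absolutelyContinuous
  exact hq.tendsto_ae.eventually h

/-- the boundary function `φ^p := p·χ_{[0,∞)} − ∑_{k≥n_φ} p_v(k)φ(·−k)` obtained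
from a polynomial-reproduction identity is supported in `[0,∞)` and satisfies the one-sided
refinement relation `φ^p = 2A_{L_p} φ^p(2·) + 2∑_{k≥n_φ} A_p(k) φ(2·−k)`. -/
theorem polynomial_boundary_refinement
    {r ℓ : ℕ} (φ : Fin r → ℝ → ℂ) (hL2 : ∀ i, MemL2 (φ i))
    (a : ℤ → Matrix (Fin r) (Fin r) ℂ) (hfin : FinSupp a)
    (lφ hφ la ha : ℤ) (hfsφ : IsFS φ lφ hφ) (hfsa : IsFSfilter a la ha)
    (href : ∀ i, ∀ᵐ (x : ℝ) ∂volume, φ i x = 2 * filtSum a φ i (2 * x))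
    (nφ : ℤ) (hnφ : -lφ ≤ nφ ∧ -la ≤ nφ)
    (js : Fin (ℓ + 1) → ℕ)
    (pv : ℤ → Matrix (Fin (ℓ + 1)) (Fin r) ℂ)
    (hrepr : ∀ t : Fin (ℓ + 1), ∀ᵐ (x : ℝ) ∂volume,
      (Function.support fun k : ℤ => ∑ j, pv k t j * φ j (x - (k : ℝ))).Finite ∧
      (x : ℂ) ^ (js t) = ∑ᶠ k : ℤ, ∑ j, pv k t j * φ j (x - (k : ℝ)))
    (φp : Fin (ℓ + 1) → ℝ → ℂ)
    (hφp : φp = fun t (x : ℝ) => (if 0 ≤ x then (x : ℂ) ^ (js t) else 0) -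
      ∑ᶠ (k : ℤ) (_ : nφ ≤ k), ∑ j, pv k t j * φ j (x - (k : ℝ)))
    (Ap : ℤ → Matrix (Fin (ℓ + 1)) (Fin r) ℂ)
    (hAp : Ap = fun k => fun t j =>
      (2 : ℂ) ^ (-(1 + (js t : ℤ))) * pv k t j -
        ∑ᶠ (n : ℤ) (_ : nφ ≤ n), ∑ j', pv n t j' * a (k - 2 * n) j' j) :
    (∀ t, ∀ᵐ (x : ℝ) ∂volume, x < 0 → φp t x = 0) ∧
    ∀ t, ∀ᵐ (x : ℝ) ∂volume,
      (Function.support fun k : ℤ =>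
        if nφ ≤ k then ∑ j, Ap k t j * φ j (2 * x - (k : ℝ)) else 0).Finite ∧
      φp t x = 2 * (2 : ℂ) ^ (-(1 + (js t : ℤ))) * φp t (2 * x) +
        2 * filtSumGe Ap φ nφ t (2 * x) := by
  have hAp' : ∀ t : Fin (ℓ + 1), ∀ (k : ℤ) (jj : Fin r),
      Ap k t jj = (2 : ℂ) ^ (-(1 + (js t : ℤ))) * pv k t jj -
        ∑ᶠ (n : ℤ) (_ : nφ ≤ n), ∑ j', pv n t j' * a (k - 2 * n) j' jj := by
    intro t k jj; rw [hAp]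
  have hla : ∀ k : ℤ, k < la → a k = 0 := fun k hk =>
    hfsa.1 k (by simp only [Set.mem_Icc]; omega)
  have E1 : ∀ᵐ x : ℝ ∂volume, ∀ (k : ℤ) (i : Fin r),
      x - (k : ℝ) < lφ → φ i (x - k) = 0 := by
    rw [MeasureTheory.ae_all_iff]
    intro k
    rw [MeasureTheory.ae_all_iff]
    intro i
    have hbelow : ∀ᵐ y : ℝ ∂volume, y < lφ → φ i y = 0 := by
      filter_upwards [hfsφ.1 i] with y hy hlt
      exact hy fun hmem => absurd hlt (not_lt.2 hmem.1)
    exact ae_shift hbelow (k : ℝ)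
  have E2 : ∀ᵐ x : ℝ ∂volume, ∀ (k : ℤ) (i : Fin r),
      2 * x - (k : ℝ) < lφ → φ i (2 * x - k) = 0 := ae_two_mul E1
  have E3 : ∀ᵐ x : ℝ ∂volume, ∀ (n : ℤ) (i : Fin r),
      φ i (x - (n : ℝ)) = 2 * filtSum a φ i (2 * (x - (n : ℝ))) := by
    rw [MeasureTheory.ae_all_iff]
    intro n
    rw [MeasureTheory.ae_all_iff]
    intro i
    exact ae_shift (href i) (n : ℝ)
  constructor
  · intro t
    filter_upwards [E1] with x h1 hx
    rw [hφp]
    exact core1 φ lφ nφ hnφ.1 t (js t) pv x hx h1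
  · intro t
    filter_upwards [E1, E2, E3] with x h1 h2 h3
    rw [hφp]
    exact core2 φ a lφ la nφ hla hnφ.2 t (js t) pv Ap (hAp' t) x h1 h2 h3


end Wavelets
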